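/- For typed terms of the minimal completion S*, substitution preserves the τ-height: if Γ, x:B ⊢ C : τ and Γ ⊢ N : B in λS*, then ℋ_τ(C[x\N]) = ℋ_τ(C). -/

import Mathlib

/-- Terms of a generic λ-calculus with sorts `S` and constants `C` (de Bruijn indices). -/
inductive Tm (S : Type) (C : Type) : Type
  | sort : S → Tm S C
  | const : C → Tm S C
  | var : Nat → Tm S C
  | app : Tm S C → Tm S C → Tm S C
  | lam : Tm S C → Tm S C → Tm S C
  | pi : Tm S C → Tm S C → Tm S C

namespace Tm
variable {S C : Type}

/-- Lifting of de Bruijn indices ≥ k by d. -/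
def lift (d k : Nat) : Tm S C → Tm S C
  | sort s => sort s
  | const c => const c
  | var i => if i < k then var i else var (i + d)
  | app m n => app (m.lift d k) (n.lift d k)
  | lam a m => lam (a.lift d k) (m.lift d (k+1))
  | pi a b => pi (a.lift d k) (b.lift d (k+1))

/-- Substitution of variable k by N. -/
def subst (k : Nat) (N : Tm S C) : Tm S C → Tm S C
  | sort s => sort s
  | const c => const c
  | var i => if i < k then var i else if i = k then N.lift k 0 else var (i-1)
  | app m n => app (subst k N m) (subst k N n)
  | lam a m => lam (subst k N a) (subst (k+1) N m)
  | pi a b => pi (subst k N a) (subst (k+1) N b)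

/-- Lifting a simultaneous substitution under a binder. -/
def upσ (σ : Nat → Tm S C) : Nat → Tm S C
  | 0 => var 0
  | i+1 => (σ i).lift 1 0

/-- Simultaneous substitution. -/
def msubst (σ : Nat → Tm S C) : Tm S C → Tm S C
  | sort s => sort s
  | const c => const c
  | var i => σ i
  | app m n => app (m.msubst σ) (n.msubst σ)
  | lam a m => lam (a.msubst σ) (m.msubst (upσ σ))
  | pi a b => pi (a.msubst σ) (b.msubst (upσ σ))

end Tm

/-- A rewrite rule [Δ] l ↝ r. -/
abbrev Rule (S C : Type) := List (Tm S C) × Tm S C × Tm S C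

/-- One-step βR-reduction (contextual closure of β together with rules of R). -/
inductive Step {S C : Type} (R : Rule S C → Prop) : Tm S C → Tm S C → Prop
  | beta {A M N} : Step R (.app (.lam A M) N) (Tm.subst 0 N M)
  | rew {Δ l r} (σ : Nat → Tm S C) : R (Δ, l, r) → Step R (l.msubst σ) (r.msubst σ)
  | appL {M M' N} : Step R M M' → Step R (.app M N) (.app M' N)
  | appR {M N N'} : Step R N N' → Step R (.app M N) (.app M N')
  | lamA {A A' M} : Step R A A' → Step R (.lam A M) (.lam A' M)
  | lamM {A M M'} : Step R M M' → Step R (.lam A M) (.lam A M')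
  | piA {A A' B} : Step R A A' → Step R (.pi A B) (.pi A' B)
  | piB {A B B'} : Step R B B' → Step R (.pi A B) (.pi A B')

/-- The empty rewrite system: pure β-reduction. -/
def NoRules {S C : Type} : Rule S C → Prop := fun _ => False

/-- Multistep reduction. -/
abbrev Red {S C : Type} (R : Rule S C → Prop) : Tm S C → Tm S C → Prop :=
  Relation.ReflTransGen (Step R)

/-- Conversion: smallest congruence containing the reduction. -/
abbrev Conv {S C : Type} (R : Rule S C → Prop) : Tm S C → Tm S C → Prop :=
  Relation.EqvGen (Step R)

/-- Pure β-reduction and conversion. -/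
abbrev BetaRed {S C : Type} : Tm S C → Tm S C → Prop := Red NoRules
abbrev BetaConv {S C : Type} : Tm S C → Tm S C → Prop := Conv NoRules

/-- Confluence of a relation. -/
def Confluent {X : Type} (r : X → X → Prop) : Prop :=
  ∀ a b c, Relation.ReflTransGen r a b → Relation.ReflTransGen r a c →
    ∃ d, Relation.ReflTransGen r b d ∧ Relation.ReflTransGen r c d

/-- A PTS specification: a set of sorts, axioms and rules. -/
structure Spec (S : Type) where
  sorts : Set S
  ax : S → S → Prop
  ru : S → S → S → Prop

/-- Functional specifications. -/
def Spec.Functional {S : Type} (sp : Spec S) : Prop :=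
  (∀ s₁ s₂ s₂', sp.ax s₁ s₂ → sp.ax s₁ s₂' → s₂ = s₂') ∧
  (∀ s₁ s₂ s₃ s₃', sp.ru s₁ s₂ s₃ → sp.ru s₁ s₂ s₃' → s₃ = s₃')

/-- Top-sorts: sorts with no axiom. -/
def Spec.TopSort {S : Type} (sp : Spec S) (s : S) : Prop :=
  s ∈ sp.sorts ∧ ¬ ∃ s', sp.ax s s'

mutual
/-- Well-formed contexts (generic typing, parametrized by a spec, a constant
signature with a validity predicate, and a rewrite system used in conversion). -/
inductive Wf {S C : Type} (sp : Spec S) (sig : C → Tm S C) (valid : C → Prop)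
    (R : Rule S C → Prop) : List (Tm S C) → Prop
  | nil : Wf sp sig valid R []
  | cons {Γ A s} : Typing sp sig valid R Γ A (.sort s) → Wf sp sig valid R (A :: Γ)

/-- Typing judgment Γ ⊢ M : A (conversion modulo βR). -/
inductive Typing {S C : Type} (sp : Spec S) (sig : C → Tm S C) (valid : C → Prop)
    (R : Rule S C → Prop) : List (Tm S C) → Tm S C → Tm S C → Prop
  | var {Γ i A} : Wf sp sig valid R Γ → Γ[i]? = some A →
      Typing sp sig valid R Γ (.var i) (A.lift (i+1) 0)
  | const {Γ c} : Wf sp sig valid R Γ → valid c →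
      Typing sp sig valid R Γ (.const c) (sig c)
  | sort {Γ s₁ s₂} : Wf sp sig valid R Γ → sp.ax s₁ s₂ →
      Typing sp sig valid R Γ (.sort s₁) (.sort s₂)
  | pi {Γ A B s₁ s₂ s₃} : Typing sp sig valid R Γ A (.sort s₁) →
      Typing sp sig valid R (A :: Γ) B (.sort s₂) → sp.ru s₁ s₂ s₃ →
      Typing sp sig valid R Γ (.pi A B) (.sort s₃)
  | lam {Γ A M B s} : Typing sp sig valid R (A :: Γ) M B →
      Typing sp sig valid R Γ (.pi A B) (.sort s) →
      Typing sp sig valid R Γ (.lam A M) (.pi A B)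
  | app {Γ M N A B} : Typing sp sig valid R Γ M (.pi A B) →
      Typing sp sig valid R Γ N A →
      Typing sp sig valid R Γ (.app M N) (Tm.subst 0 N B)
  | conv {Γ M A B s} : Typing sp sig valid R Γ M A →
      Typing sp sig valid R Γ B (.sort s) → Conv R A B →
      Typing sp sig valid R Γ M B
end

/-- Typing in a pure type system λS (no constants, no rewriting). -/
abbrev PTyping {S : Type} (sp : Spec S) :
    List (Tm S Empty) → Tm S Empty → Tm S Empty → Prop :=
  Typing sp (fun c => c.elim) (fun _ => False) NoRules

abbrev PWf {S : Type} (sp : Spec S) : List (Tm S Empty) → Prop :=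
  Wf sp (fun c => c.elim) (fun _ => False) NoRules

/-- The two sorts of the λΠ-calculus. -/
inductive LSort : Type
  | ty : LSort
  | kd : LSort

/-- The specification of the λΠ-calculus: Type : Kind, rules (Type,Type,Type),(Type,Kind,Kind). -/
def lpiSpec : Spec LSort where
  sorts := Set.univ
  ax s₁ s₂ := s₁ = .ty ∧ s₂ = .kd
  ru s₁ s₂ s₃ := s₁ = .ty ∧ ((s₂ = .ty ∧ s₃ = .ty) ∨ (s₂ = .kd ∧ s₃ = .kd))

/-- A rewrite rule is well-typed in the signature when both sides have a common type
in the plain λΠ-calculus (no rewriting) over that signature. -/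
def RuleWellTyped {C : Type} (sig : C → Tm LSort C) (valid : C → Prop)
    (ρ : Rule LSort C) : Prop :=
  ∃ A, Typing lpiSpec sig valid NoRules ρ.1 ρ.2.1 A ∧
       Typing lpiSpec sig valid NoRules ρ.1 ρ.2.2 A

/-- Well-formed signature: every constant's type is a λΠ type in the empty context. -/
def SigWellFormed {C : Type} (sig : C → Tm LSort C) (valid : C → Prop) : Prop :=
  ∀ c, valid c → ∃ s, Typing lpiSpec sig valid NoRules [] (sig c) (.sort s)

/-- Constants of the Cousineau–Dowek signature Σ_S. -/
inductive Const (S : Type) : Type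
  | u : S → Const S
  | eps : S → Const S
  | dot : S → S → Const S
  | pidot : S → S → S → Const S

/-- Types of the constants of Σ_S. -/
def sigS {S : Type} : Const S → Tm LSort (Const S)
  | .u _ => .sort .ty
  | .eps s => .pi (.const (.u s)) (.sort .ty)
  | .dot _ s₂ => .const (.u s₂)
  | .pidot s₁ s₂ s₃ =>
      .pi (.const (.u s₁))
        (.pi (.pi (.app (.const (.eps s₁)) (.var 0)) (.const (.u s₂))) (.const (.u s₃)))

/-- Valid constants of Σ_S (u_s, ε_s for sorts; ṡ₁ : u_{s₂} for axioms; π̇ for rules). -/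
def validS {S : Type} (sp : Spec S) : Const S → Prop
  | .u s => s ∈ sp.sorts
  | .eps s => s ∈ sp.sorts
  | .dot s₁ s₂ => sp.ax s₁ s₂
  | .pidot s₁ s₂ s₃ => sp.ru s₁ s₂ s₃

/-- The rewrite system R_S: ε_{s₂} ṡ₁ ↝ u_{s₁} and
ε_{s₃}(π̇_{s₁s₂s₃} A B) ↝ Πx:(ε_{s₁}A). ε_{s₂}(B x). -/
inductive RS {S : Type} (sp : Spec S) : Rule LSort (Const S) → Prop
  | axRule {s₁ s₂} : sp.ax s₁ s₂ →
      RS sp ([], .app (.const (.eps s₂)) (.const (.dot s₁ s₂)), .const (.u s₁))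
  | piRule {s₁ s₂ s₃} : sp.ru s₁ s₂ s₃ →
      RS sp ([.pi (.app (.const (.eps s₁)) (.var 0)) (.const (.u s₂)), .const (.u s₁)],
             .app (.const (.eps s₃)) (.app (.app (.const (.pidot s₁ s₂ s₃)) (.var 1)) (.var 0)),
             .pi (.app (.const (.eps s₁)) (.var 1)) (.app (.const (.eps s₂)) (.app (.var 1) (.var 0))))

/-- Typing in λΠ/S. -/
abbrev LTyping {S : Type} (sp : Spec S) :
    List (Tm LSort (Const S)) → Tm LSort (Const S) → Tm LSort (Const S) → Prop :=
  Typing lpiSpec sigS (validS sp) (RS sp)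

abbrev LWf {S : Type} (sp : Spec S) : List (Tm LSort (Const S)) → Prop :=
  Wf lpiSpec sigS (validS sp) (RS sp)

mutual
/-- Forward translation of terms: |M|_Γ = M'. -/
inductive TrT {S : Type} (sp : Spec S) :
    List (Tm S Empty) → Tm S Empty → Tm LSort (Const S) → Prop
  | sort {Γ s s'} : sp.ax s s' → TrT sp Γ (.sort s) (.const (.dot s s'))
  | var {Γ i} : TrT sp Γ (.var i) (.var i)
  | app {Γ M M' N N'} : TrT sp Γ M M' → TrT sp Γ N N' →
      TrT sp Γ (.app M N) (.app M' N')
  | lam {Γ A A' M M'} : TrTy sp Γ A A' → TrT sp (A :: Γ) M M' →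
      TrT sp Γ (.lam A M) (.lam A' M')
  | pi {Γ A B s₁ s₂ s₃ A' A'' B'} : PTyping sp Γ A (.sort s₁) →
      PTyping sp (A :: Γ) B (.sort s₂) → sp.ru s₁ s₂ s₃ →
      TrT sp Γ A A' → TrTy sp Γ A A'' → TrT sp (A :: Γ) B B' →
      TrT sp Γ (.pi A B) (.app (.app (.const (.pidot s₁ s₂ s₃)) A') (.lam A'' B'))

/-- Forward translation of types: ‖A‖_Γ = A'. -/
inductive TrTy {S : Type} (sp : Spec S) :
    List (Tm S Empty) → Tm S Empty → Tm LSort (Const S) → Prop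
  | sort {Γ s} : TrTy sp Γ (.sort s) (.const (.u s))
  | pi {Γ A A' B B'} : TrTy sp Γ A A' → TrTy sp (A :: Γ) B B' →
      TrTy sp Γ (.pi A B) (.pi A' B')
  | el {Γ A s A'} : PTyping sp Γ A (.sort s) → TrT sp Γ A A' →
      TrTy sp Γ A (.app (.const (.eps s)) A')
end

/-- Forward translation of contexts ‖Γ‖. -/
inductive TrCtx {S : Type} (sp : Spec S) :
    List (Tm S Empty) → List (Tm LSort (Const S)) → Prop
  | nil : TrCtx sp [] []
  | cons {Γ Γ' A A'} : TrCtx sp Γ Γ' → TrTy sp Γ A A' → TrCtx sp (A :: Γ) (A' :: Γ')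

mutual
/-- Inverse translation of terms: φ(M) = M'. -/
inductive InvT {S : Type} : Tm LSort (Const S) → Tm S Empty → Prop
  | dot {s₁ s₂} : InvT (.const (.dot s₁ s₂)) (.sort s₁)
  | pidot {s₁ s₂ s₃} : InvT (.const (.pidot s₁ s₂ s₃))
      (.lam (.sort s₁) (.lam (.pi (.var 0) (.sort s₂))
        (.pi (.var 1) (.app (.var 1) (.var 0)))))
  | var {i} : InvT (.var i) (.var i)
  | app {M M' N N'} : InvT M M' → InvT N N' → InvT (.app M N) (.app M' N')
  | lam {A A' M M'} : InvTy A A' → InvT M M' → InvT (.lam A M) (.lam A' M')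

/-- Inverse translation of types: ψ(A) = A'. -/
inductive InvTy {S : Type} : Tm LSort (Const S) → Tm S Empty → Prop
  | u {s} : InvTy (.const (.u s)) (.sort s)
  | el {s M M'} : InvT M M' → InvTy (.app (.const (.eps s)) M) M'
  | pi {A A' B B'} : InvTy A A' → InvTy B B' → InvTy (.pi A B) (.pi A' B')
end

/-- Inverse translation of (object) contexts ψ(Γ). -/
inductive InvCtx {S : Type} : List (Tm LSort (Const S)) → List (Tm S Empty) → Prop
  | nil : InvCtx [] []
  | cons {Γ Γ' A A'} : InvCtx Γ Γ' → InvTy A A' → InvCtx (A :: Γ) (A' :: Γ')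

/-- The minimal completion S* of S: a fresh top-sort τ, axioms s:τ for the top-sorts
of S, and rules (s₁,s₂,τ) for all pairs having no rule. -/
def mc {S : Type} (sp : Spec S) (τ : S) : Spec S where
  sorts := insert τ sp.sorts
  ax s₁ s₂ := sp.ax s₁ s₂ ∨ (s₁ ∈ sp.sorts ∧ (¬ ∃ s, sp.ax s₁ s) ∧ s₂ = τ)
  ru s₁ s₂ s₃ := sp.ru s₁ s₂ s₃ ∨
      (s₁ ∈ insert τ sp.sorts ∧ s₂ ∈ insert τ sp.sorts ∧ (¬ ∃ s, sp.ru s₁ s₂ s) ∧ s₃ = τ)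

/-- S' is a completion of S. -/
def IsCompletion {S : Type} (sp sp' : Spec S) : Prop :=
  sp.sorts ⊆ sp'.sorts ∧
  (∀ s₁ s₂, sp.ax s₁ s₂ → sp'.ax s₁ s₂) ∧
  (∀ s₁ s₂ s₃, sp.ru s₁ s₂ s₃ → sp'.ru s₁ s₂ s₃) ∧
  (∀ s₁ ∈ sp.sorts, ∃ s₂, sp'.ax s₁ s₂) ∧
  (∀ s₁ ∈ sp'.sorts, ∀ s₂ ∈ sp'.sorts, ∃ s₃, sp'.ru s₁ s₂ s₃)

/-- Kind-level β-reduction in a λΠ-calculus modulo: contraction of a β-redex whose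
type has type Kind, under any context. -/
inductive KindStep {C : Type} (sig : C → Tm LSort C) (valid : C → Prop)
    (R : Rule LSort C → Prop) : List (Tm LSort C) → Tm LSort C → Tm LSort C → Prop
  | beta {Γ A M N T} :
      Typing lpiSpec sig valid R Γ (.app (.lam A M) N) T →
      Typing lpiSpec sig valid R Γ T (.sort .kd) →
      KindStep sig valid R Γ (.app (.lam A M) N) (Tm.subst 0 N M)
  | appL {Γ M M' N} : KindStep sig valid R Γ M M' →
      KindStep sig valid R Γ (.app M N) (.app M' N)
  | appR {Γ M N N'} : KindStep sig valid R Γ N N' →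
      KindStep sig valid R Γ (.app M N) (.app M N')
  | lamA {Γ A A' M} : KindStep sig valid R Γ A A' →
      KindStep sig valid R Γ (.lam A M) (.lam A' M)
  | lamM {Γ A M M'} : KindStep sig valid R (A :: Γ) M M' →
      KindStep sig valid R Γ (.lam A M) (.lam A M')
  | piA {Γ A A' B} : KindStep sig valid R Γ A A' →
      KindStep sig valid R Γ (.pi A B) (.pi A' B)
  | piB {Γ A B B'} : KindStep sig valid R (A :: Γ) B B' →
      KindStep sig valid R Γ (.pi A B) (.pi A B')

/-- A term with no Kind-level β-redexes (a λΠ⁻ term). -/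
def KindFree {C : Type} (sig : C → Tm LSort C) (valid : C → Prop)
    (R : Rule LSort C → Prop) (Γ : List (Tm LSort C)) (M : Tm LSort C) : Prop :=
  ∀ N, ¬ KindStep sig valid R Γ M N

/-- Object contexts of λΠ/S: every declared type has type Type. -/
def ObjCtx {S : Type} (sp : Spec S) (Γ : List (Tm LSort (Const S))) : Prop :=
  ∀ i A, Γ[i]? = some A → LTyping sp (Γ.drop (i+1)) A (.sort .ty)

/-- The τ-height measure ℋ_τ on Γ-types of λS*. -/
inductive Ht {S : Type} (sp : Spec S) (τ : S) :
    List (Tm S Empty) → Tm S Empty → Nat → Prop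
  | ntau {Γ A s} : PTyping (mc sp τ) Γ A (.sort s) → s ≠ τ → Ht sp τ Γ A 0
  | srt {Γ s'} : PTyping (mc sp τ) Γ (.sort s') (.sort τ) → Ht sp τ Γ (.sort s') 0
  | pi {Γ B C m n} : PTyping (mc sp τ) Γ (.pi B C) (.sort τ) →
      Ht sp τ Γ B m → Ht sp τ (B :: Γ) C n → Ht sp τ Γ (.pi B C) (max m n + 1)

/-- The reducibility predicate, stratified by the τ-height of the type. -/
def RedN {S : Type} (sp : Spec S) (τ : S) :
    Nat → List (Tm S Empty) → Tm S Empty → Tm S Empty → Prop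
  | n, Γ, M, A =>
    PWf sp Γ ∧ ∃ s, PTyping (mc sp τ) Γ M A ∧ PTyping (mc sp τ) Γ A (.sort s) ∧
      ((s ≠ τ ∨ ∃ s' ∈ sp.sorts, A = .sort s') →
        ∃ M' A', BetaRed M M' ∧ BetaRed A A' ∧ PTyping sp Γ M' A') ∧
      (s = τ → ∀ B C, A = .pi B C → ∀ N,
        (∀ m (hm : m < n), Ht sp τ Γ B m → RedN sp τ m Γ N B) →
        ∀ m (hm : m < n), Ht sp τ Γ (Tm.subst 0 N C) m →
          RedN sp τ m Γ (.app M N) (Tm.subst 0 N C))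
  termination_by n => n

/-- The reducibility predicate Γ ⊨_S M : A. -/
def Reducible {S : Type} (sp : Spec S) (τ : S)
    (Γ : List (Tm S Empty)) (M A : Tm S Empty) : Prop :=
  ∃ n, Ht sp τ Γ A n ∧ RedN sp τ n Γ M A


namespace Tm
variable {S C : Type}

@[simp] lemma lift_zero (M : Tm S C) (k : Nat) : M.lift 0 k = M := by
  induction M generalizing k <;> simp [lift, *]

lemma lift_lift_low (M : Tm S C) {d d' k k' : Nat} (h : k' ≤ k) :
    lift d' k' (lift d k M) = lift d (d' + k) (lift d' k' M) := by
  induction M generalizing k k' with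
  | var i =>
      simp only [lift]
      split_ifs <;> simp only [lift] <;> split_ifs <;>
        first | rfl | omega | (congr 1; omega)
  | lam A M ihA ihM =>
      have e : d' + (k + 1) = d' + k + 1 := rfl
      simp only [lift]; rw [ihA h, ihM (k := k+1) (k' := k'+1) (by omega), e]
  | pi A M ihA ihM =>
      have e : d' + (k + 1) = d' + k + 1 := rfl
      simp only [lift]; rw [ihA h, ihM (k := k+1) (k' := k'+1) (by omega), e]
  | app A M ihA ihM => simp only [lift]; rw [ihA h, ihM h]
  | _ => rfl

lemma lift_lift_mid (M : Tm S C) {d d' k k' : Nat} (h1 : k ≤ k') (h2 : k' ≤ k + d) :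
    lift d' k' (lift d k M) = lift (d + d') k M := by
  induction M generalizing k k' with
  | var i =>
      simp only [lift]
      split_ifs <;> simp only [lift] <;> split_ifs <;>
        first | rfl | omega | (congr 1; omega)
  | lam A M ihA ihM =>
      simp only [lift]; rw [ihA h1 h2, ihM (k := k+1) (k' := k'+1) (by omega) (by omega)]
  | pi A M ihA ihM =>
      simp only [lift]; rw [ihA h1 h2, ihM (k := k+1) (k' := k'+1) (by omega) (by omega)]
  | app A M ihA ihM => simp only [lift]; rw [ihA h1 h2, ihM h1 h2]
  | _ => rfl

lemma lift_lift_high (M : Tm S C) {d d' k k' : Nat} (h : k + d ≤ k') :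
    lift d' k' (lift d k M) = lift d k (lift d' (k' - d) M) := by
  induction M generalizing k k' with
  | var i =>
      simp only [lift]
      split_ifs <;> simp only [lift] <;> split_ifs <;>
        first | rfl | omega | (congr 1; omega)
  | lam A M ihA ihM =>
      have e : k' - d + 1 = k' + 1 - d := by omega
      simp only [lift]; rw [ihA h, ihM (k := k+1) (k' := k'+1) (by omega), e]
  | pi A M ihA ihM =>
      have e : k' - d + 1 = k' + 1 - d := by omega
      simp only [lift]; rw [ihA h, ihM (k := k+1) (k' := k'+1) (by omega), e]
  | app A M ihA ihM => simp only [lift]; rw [ihA h, ihM h]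
  | _ => rfl

lemma lift_subst (M N : Tm S C) {d j k : Nat} (h : k ≤ j) :
    lift d j (Tm.subst k N M) = Tm.subst k (lift d (j - k) N) (lift d (j+1) M) := by
  induction M generalizing j k with
  | var i =>
      simp only [subst, lift]
      split_ifs <;> simp only [subst, lift] <;> split_ifs <;>
        first
          | rfl | omega | (congr 1; omega)
          | (rw [lift_lift_high N (by omega)])
  | lam A M ihA ihM =>
      have e : j + 1 - (k + 1) = j - k := by omega
      simp only [subst, lift]; rw [ihA h, ihM (j := j+1) (k := k+1) (by omega), e]
  | pi A M ihA ihM =>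
      have e : j + 1 - (k + 1) = j - k := by omega
      simp only [subst, lift]; rw [ihA h, ihM (j := j+1) (k := k+1) (by omega), e]
  | app A M ihA ihM => simp only [subst, lift]; rw [ihA h, ihM h]
  | _ => rfl

lemma subst_lift_high (M N : Tm S C) {d c j : Nat} (h : c + d ≤ j) :
    Tm.subst j N (lift d c M) = lift d c (Tm.subst (j - d) N M) := by
  induction M generalizing c j with
  | var i =>
      simp only [subst, lift]
      split_ifs <;> simp only [subst, lift] <;> split_ifs <;>
        first
          | rfl | omega | (congr 1; omega)
          | (rw [lift_lift_mid N (by omega) (by omega)]; congr 1; omega)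
  | lam A M ihA ihM =>
      have e : j - d + 1 = j + 1 - d := by omega
      simp only [subst, lift]; rw [ihA h, ihM (c := c+1) (j := j+1) (by omega), e]
  | pi A M ihA ihM =>
      have e : j - d + 1 = j + 1 - d := by omega
      simp only [subst, lift]; rw [ihA h, ihM (c := c+1) (j := j+1) (by omega), e]
  | app A M ihA ihM => simp only [subst, lift]; rw [ihA h, ihM h]
  | _ => rfl

lemma subst_lift_cancel (M N : Tm S C) {d c k : Nat} (h1 : c ≤ k) (h2 : k < c + d) :
    Tm.subst k N (lift d c M) = lift (d-1) c M := by
  induction M generalizing c k with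
  | var i =>
      simp only [subst, lift]
      split_ifs <;> simp only [subst, lift] <;> split_ifs <;>
        first | rfl | omega | (congr 1; omega)
  | lam A M ihA ihM =>
      simp only [subst, lift]; rw [ihA h1 h2, ihM (c := c+1) (k := k+1) (by omega) (by omega)]
  | pi A M ihA ihM =>
      simp only [subst, lift]; rw [ihA h1 h2, ihM (c := c+1) (k := k+1) (by omega) (by omega)]
  | app A M ihA ihM => simp only [subst, lift]; rw [ihA h1 h2, ihM h1 h2]
  | _ => rfl

lemma subst_subst (M N N' : Tm S C) {j k : Nat} (h : k ≤ j) :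
    Tm.subst j N (Tm.subst k N' M)
      = Tm.subst k (Tm.subst (j - k) N N') (Tm.subst (j+1) N M) := by
  induction M generalizing j k with
  | var i =>
      simp only [subst]
      split_ifs <;> (try simp only [subst, lift]) <;> (try split_ifs) <;>
        first
          | rfl | omega | (congr 1; omega)
          | (rw [subst_lift_high N' N (by omega)])
          | (rw [subst_lift_cancel N (Tm.subst (j - k) N N') (by omega) (by omega),
                 Nat.add_sub_cancel])
  | lam A M ihA ihM =>
      have e : j + 1 - (k + 1) = j - k := by omega
      simp only [subst]; rw [ihA h, ihM (j := j+1) (k := k+1) (by omega), e]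
  | pi A M ihA ihM =>
      have e : j + 1 - (k + 1) = j - k := by omega
      simp only [subst]; rw [ihA h, ihM (j := j+1) (k := k+1) (by omega), e]
  | app A M ihA ihM => simp only [subst]; rw [ihA h, ihM h]
  | _ => rfl

end Tm
section Beta
variable {S C : Type}

lemma Step.lift {M M' : Tm S C} (h : Step NoRules M M') (d k : Nat) :
    Step NoRules (Tm.lift d k M) (Tm.lift d k M') := by
  induction h generalizing k with
  | @beta A M N =>
      simp only [Tm.lift]
      rw [Tm.lift_subst M N (Nat.zero_le k), Nat.sub_zero]
      exact Step.beta
  | rew σ hr => cases hr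
  | appL _ ih => exact Step.appL (ih k)
  | appR _ ih => exact Step.appR (ih k)
  | lamA _ ih => exact Step.lamA (ih k)
  | lamM _ ih => exact Step.lamM (ih (k+1))
  | piA _ ih => exact Step.piA (ih k)
  | piB _ ih => exact Step.piB (ih (k+1))

lemma Step.subst {M M' : Tm S C} (h : Step NoRules M M') (k : Nat) (N : Tm S C) :
    Step NoRules (Tm.subst k N M) (Tm.subst k N M') := by
  induction h generalizing k with
  | @beta A M N' =>
      simp only [Tm.subst]
      rw [Tm.subst_subst M N N' (Nat.zero_le k), Nat.sub_zero]
      exact Step.beta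
  | rew σ hr => cases hr
  | appL _ ih => exact Step.appL (ih k)
  | appR _ ih => exact Step.appR (ih k)
  | lamA _ ih => exact Step.lamA (ih k)
  | lamM _ ih => exact Step.lamM (ih (k+1))
  | piA _ ih => exact Step.piA (ih k)
  | piB _ ih => exact Step.piB (ih (k+1))

lemma conv_map {R : Rule S C → Prop} (f : Tm S C → Tm S C)
    (hf : ∀ a b, Step R a b → Step R (f a) (f b)) {a b : Tm S C}
    (h : Conv R a b) : Conv R (f a) (f b) := by
  induction h with
  | rel _ _ h => exact Relation.EqvGen.rel _ _ (hf _ _ h)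
  | refl => exact Relation.EqvGen.refl _
  | symm _ _ _ ih => exact ih.symm _ _
  | trans _ _ _ _ _ ih1 ih2 => exact ih1.trans _ _ _ ih2

lemma conv_subst {B B' : Tm S C} (h : Conv NoRules B B') (k : Nat) (N : Tm S C) :
    Conv NoRules (Tm.subst k N B) (Tm.subst k N B') :=
  conv_map _ (fun _ _ hs => hs.subst k N) h

lemma conv_lift {B B' : Tm S C} (h : Conv NoRules B B') (d k : Nat) :
    Conv NoRules (Tm.lift d k B) (Tm.lift d k B') :=
  conv_map _ (fun _ _ hs => hs.lift d k) h

lemma red_of_conv_dir {R : Rule S C → Prop} {a b : Tm S C} (h : Red R a b) :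
    Conv R a b := by
  induction h with
  | refl => exact Relation.EqvGen.refl _
  | tail _ hs ih => exact ih.trans _ _ _ (Relation.EqvGen.rel _ _ hs)

/-- Parallel reduction for pure β. -/
inductive Par : Tm S C → Tm S C → Prop
  | sort (s : S) : Par (.sort s) (.sort s)
  | const (c : C) : Par (.const c) (.const c)
  | var (i : Nat) : Par (.var i) (.var i)
  | app {M M' N N'} : Par M M' → Par N N' → Par (.app M N) (.app M' N')
  | lam {A A' M M'} : Par A A' → Par M M' → Par (.lam A M) (.lam A' M')
  | pi {A A' B B'} : Par A A' → Par B B' → Par (.pi A B) (.pi A' B')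
  | beta {A M M' N N'} : Par M M' → Par N N' →
      Par (.app (.lam A M) N) (Tm.subst 0 N' M')

lemma Par.refl : ∀ M : Tm S C, Par M M := by
  intro M; induction M with
  | sort s => exact .sort s
  | const c => exact .const c
  | var i => exact .var i
  | app _ _ ih1 ih2 => exact .app ih1 ih2
  | lam _ _ ih1 ih2 => exact .lam ih1 ih2
  | pi _ _ ih1 ih2 => exact .pi ih1 ih2

lemma Par.of_step {M M' : Tm S C} (h : Step NoRules M M') : Par M M' := by
  induction h with
  | beta => exact Par.beta (Par.refl _) (Par.refl _)
  | rew σ hr => cases hr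
  | appL _ ih => exact .app ih (Par.refl _)
  | appR _ ih => exact .app (Par.refl _) ih
  | lamA _ ih => exact .lam ih (Par.refl _)
  | lamM _ ih => exact .lam (Par.refl _) ih
  | piA _ ih => exact .pi ih (Par.refl _)
  | piB _ ih => exact .pi (Par.refl _) ih

lemma Red.appL {M M' N : Tm S C} (h : BetaRed M M') :
    BetaRed (.app M N) (.app M' N) :=
  Relation.ReflTransGen.lift (fun x => Tm.app x N) (fun _ _ hs => Step.appL hs) _ _ h
lemma Red.appR {M N N' : Tm S C} (h : BetaRed N N') :
    BetaRed (.app M N) (.app M N') :=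
  Relation.ReflTransGen.lift (fun x => Tm.app M x) (fun _ _ hs => Step.appR hs) _ _ h
lemma Red.lamA {A A' M : Tm S C} (h : BetaRed A A') :
    BetaRed (.lam A M) (.lam A' M) :=
  Relation.ReflTransGen.lift (fun x => Tm.lam x M) (fun _ _ hs => Step.lamA hs) _ _ h
lemma Red.lamM {A M M' : Tm S C} (h : BetaRed M M') :
    BetaRed (.lam A M) (.lam A M') :=
  Relation.ReflTransGen.lift (fun x => Tm.lam A x) (fun _ _ hs => Step.lamM hs) _ _ h
lemma Red.piA {A A' B : Tm S C} (h : BetaRed A A') :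
    BetaRed (.pi A B) (.pi A' B) :=
  Relation.ReflTransGen.lift (fun x => Tm.pi x B) (fun _ _ hs => Step.piA hs) _ _ h
lemma Red.piB {A B B' : Tm S C} (h : BetaRed B B') :
    BetaRed (.pi A B) (.pi A B') :=
  Relation.ReflTransGen.lift (fun x => Tm.pi A x) (fun _ _ hs => Step.piB hs) _ _ h

lemma Par.toRed {M M' : Tm S C} (h : Par M M') : BetaRed M M' := by
  induction h with
  | sort s => exact .refl
  | const c => exact .refl
  | var i => exact .refl
  | app _ _ ih1 ih2 => exact (Red.appL ih1).trans (Red.appR ih2)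
  | lam _ _ ih1 ih2 => exact (Red.lamA ih1).trans (Red.lamM ih2)
  | pi _ _ ih1 ih2 => exact (Red.piA ih1).trans (Red.piB ih2)
  | @beta A M M' N N' _ _ ih1 ih2 =>
      exact ((Red.appL (Red.lamM ih1)).trans (Red.appR ih2)).tail Step.beta

lemma Par.lift {M M' : Tm S C} (h : Par M M') (d k : Nat) :
    Par (Tm.lift d k M) (Tm.lift d k M') := by
  induction h generalizing k with
  | sort s => exact .sort s
  | const c => exact .const c
  | var i => simp only [Tm.lift]; split_ifs <;> exact Par.refl _
  | app _ _ ih1 ih2 => exact .app (ih1 k) (ih2 k)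
  | lam _ _ ih1 ih2 => exact .lam (ih1 k) (ih2 (k+1))
  | pi _ _ ih1 ih2 => exact .pi (ih1 k) (ih2 (k+1))
  | @beta A M M' N N' _ _ ih1 ih2 =>
      simp only [Tm.lift]
      rw [Tm.lift_subst M' N' (Nat.zero_le k), Nat.sub_zero]
      exact Par.beta (ih1 (k+1)) (ih2 k)

lemma Par.subst_par {M M' N N' : Tm S C} (h : Par M M') (hN : Par N N') (k : Nat) :
    Par (Tm.subst k N M) (Tm.subst k N' M') := by
  induction h generalizing k with
  | sort s => exact .sort s
  | const c => exact .const c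
  | var i =>
      simp only [Tm.subst]
      split_ifs <;> first | exact Par.refl _ | exact hN.lift k 0
  | app _ _ ih1 ih2 => exact .app (ih1 k) (ih2 k)
  | lam _ _ ih1 ih2 => exact .lam (ih1 k) (ih2 (k+1))
  | pi _ _ ih1 ih2 => exact .pi (ih1 k) (ih2 (k+1))
  | @beta A M M' N₁ N₁' _ _ ih1 ih2 =>
      simp only [Tm.subst]
      rw [Tm.subst_subst M' N' N₁' (Nat.zero_le k), Nat.sub_zero]
      exact Par.beta (ih1 (k+1)) (ih2 k)

/-- Complete development. -/
def cd : Tm S C → Tm S C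
  | .sort s => .sort s
  | .const c => .const c
  | .var i => .var i
  | .app (.lam _ M) N => Tm.subst 0 (cd N) (cd M)
  | .app (.sort s) N => .app (.sort s) (cd N)
  | .app (.const c) N => .app (.const c) (cd N)
  | .app (.var i) N => .app (.var i) (cd N)
  | .app (.app M₁ M₂) N => .app (cd (.app M₁ M₂)) (cd N)
  | .app (.pi A B) N => .app (cd (.pi A B)) (cd N)
  | .lam A M => .lam (cd A) (cd M)
  | .pi A B => .pi (cd A) (cd B)

lemma par_lam_inv {A M T : Tm S C} (h : Par (.lam A M) T) :
    ∃ A' M', T = .lam A' M' ∧ Par A A' ∧ Par M M' := by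
  cases h with
  | lam h1 h2 => exact ⟨_, _, rfl, h1, h2⟩

lemma par_triangle {M N : Tm S C} (h : Par M N) : Par N (cd M) := by
  induction h with
  | sort s => exact .sort s
  | const c => exact .const c
  | var i => exact .var i
  | @beta A M M' N N' _ _ ih1 ih2 =>
      simp only [cd]
      exact ih1.subst_par ih2 0
  | @app M M' N N' hM _ ihM ihN =>
      cases M with
      | lam A M₁ =>
          obtain ⟨A', M₁', rfl, hA, hM₁⟩ := par_lam_inv hM
          simp only [cd] at ihM ⊢
          obtain ⟨A₂, M₂, he, hA₂, hM₂⟩ := par_lam_inv ihM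
          injection he with e1 e2
          subst e1; subst e2
          exact Par.beta hM₂ ihN
      | sort s => exact .app ihM ihN
      | const c => exact .app ihM ihN
      | var i => exact .app ihM ihN
      | app _ _ => exact .app ihM ihN
      | pi _ _ => exact .app ihM ihN
  | lam _ _ ih1 ih2 => exact .lam ih1 ih2
  | pi _ _ ih1 ih2 => exact .pi ih1 ih2

lemma par_diamond {a b c : Tm S C} (h1 : Par a b) (h2 : Par a c) :
    ∃ d, Par b d ∧ Par c d := ⟨cd a, par_triangle h1, par_triangle h2⟩

lemma beta_confluent : Confluent (Step (NoRules (S := S) (C := C))) := by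
  intro a b c hab hac
  have hmono : ∀ {x y : Tm S C}, Relation.ReflTransGen (Step NoRules) x y →
      Relation.ReflTransGen Par x y :=
    fun h => Relation.ReflTransGen.mono (fun _ _ hs => Par.of_step hs) _ _ h
  have hback : ∀ {x y : Tm S C}, Relation.ReflTransGen Par x y →
      Relation.ReflTransGen (Step NoRules) x y := by
    intro x y h
    induction h with
    | refl => exact .refl
    | tail _ hp ih => exact ih.trans hp.toRed
  have hcr := Relation.church_rosser
    (r := Par (S := S) (C := C))
    (fun a b c h1 h2 => by
      obtain ⟨d, hd1, hd2⟩ := par_diamond h1 h2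
      exact ⟨d, Relation.ReflGen.single hd1, Relation.ReflTransGen.single hd2⟩)
    (hmono hab) (hmono hac)
  obtain ⟨d, hd1, hd2⟩ := hcr
  exact ⟨d, hback hd1, hback hd2⟩

lemma conv_join {a b : Tm S C} (h : Conv NoRules a b) :
    ∃ c, BetaRed a c ∧ BetaRed b c := by
  induction h with
  | rel _ _ h => exact ⟨_, Relation.ReflTransGen.single h, .refl⟩
  | refl a => exact ⟨a, .refl, .refl⟩
  | symm _ _ _ ih => obtain ⟨c, h1, h2⟩ := ih; exact ⟨c, h2, h1⟩
  | trans a b c _ _ ih1 ih2 =>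
      obtain ⟨d1, h1, h2⟩ := ih1
      obtain ⟨d2, h3, h4⟩ := ih2
      obtain ⟨e, h5, h6⟩ := beta_confluent _ _ _ h2 h3
      exact ⟨e, h1.trans h5, h4.trans h6⟩

lemma step_cases {a b : Tm S C} (h : Step NoRules a b) :
    (∃ A M N, a = .app (.lam A M) N ∧ b = Tm.subst 0 N M) ∨
    (∃ M M' N, a = .app M N ∧ b = .app M' N ∧ Step NoRules M M') ∨
    (∃ M N N', a = .app M N ∧ b = .app M N' ∧ Step NoRules N N') ∨
    (∃ A A' M, a = .lam A M ∧ b = .lam A' M ∧ Step NoRules A A') ∨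
    (∃ A M M', a = .lam A M ∧ b = .lam A M' ∧ Step NoRules M M') ∨
    (∃ A A' B, a = .pi A B ∧ b = .pi A' B ∧ Step NoRules A A') ∨
    (∃ A B B', a = .pi A B ∧ b = .pi A B' ∧ Step NoRules B B') := by
  cases h with
  | beta => exact Or.inl ⟨_, _, _, rfl, rfl⟩
  | rew σ hr => cases hr
  | appL h => exact Or.inr (Or.inl ⟨_, _, _, rfl, rfl, h⟩)
  | appR h => exact Or.inr (Or.inr (Or.inl ⟨_, _, _, rfl, rfl, h⟩))
  | lamA h => exact Or.inr (Or.inr (Or.inr (Or.inl ⟨_, _, _, rfl, rfl, h⟩)))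
  | lamM h => exact Or.inr (Or.inr (Or.inr (Or.inr (Or.inl ⟨_, _, _, rfl, rfl, h⟩))))
  | piA h =>
      exact Or.inr (Or.inr (Or.inr (Or.inr (Or.inr (Or.inl ⟨_, _, _, rfl, rfl, h⟩)))))
  | piB h =>
      exact Or.inr (Or.inr (Or.inr (Or.inr (Or.inr (Or.inr ⟨_, _, _, rfl, rfl, h⟩)))))

lemma red_sort_inv {s : S} {M : Tm S C} (h : BetaRed (.sort s) M) :
    M = .sort s := by
  induction h with
  | refl => rfl
  | tail _ hs ih =>
      subst ih
      rcases step_cases hs with ⟨_,_,_,he,_⟩|⟨_,_,_,he,_,_⟩|⟨_,_,_,he,_,_⟩|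
        ⟨_,_,_,he,_,_⟩|⟨_,_,_,he,_,_⟩|⟨_,_,_,he,_,_⟩|⟨_,_,_,he,_,_⟩ <;> simp at he

lemma red_pi_inv {A B : Tm S C} {M : Tm S C} (h : BetaRed (.pi A B) M) :
    ∃ A' B', M = .pi A' B' ∧ BetaRed A A' ∧ BetaRed B B' := by
  induction h with
  | refl => exact ⟨A, B, rfl, .refl, .refl⟩
  | tail _ hs ih =>
      obtain ⟨A', B', rfl, h1, h2⟩ := ih
      rcases step_cases hs with ⟨_,_,_,he,_⟩|⟨_,_,_,he,_,_⟩|⟨_,_,_,he,_,_⟩|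
        ⟨_,_,_,he,_,_⟩|⟨_,_,_,he,_,_⟩|⟨A₀,A₀',B₀,he,hb,hs'⟩|⟨A₀,B₀,B₀',he,hb,hs'⟩ <;>
        (try simp at he)
      · obtain ⟨e1, e2⟩ := he; subst e1; subst e2; subst hb
        exact ⟨_, _, rfl, h1.tail hs', h2⟩
      · obtain ⟨e1, e2⟩ := he; subst e1; subst e2; subst hb
        exact ⟨_, _, rfl, h1, h2.tail hs'⟩

lemma conv_sort_inj {s s' : S} (h : Conv (NoRules (C := C)) (.sort s) (.sort s')) :
    s = s' := by
  obtain ⟨c, h1, h2⟩ := conv_join h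
  rw [red_sort_inv h1] at h2
  exact Tm.sort.inj (red_sort_inv h2)

lemma conv_pi_inj {A B A' B' : Tm S C}
    (h : Conv NoRules (.pi A B) (.pi A' B')) :
    Conv NoRules A A' ∧ Conv NoRules B B' := by
  obtain ⟨c, h1, h2⟩ := conv_join h
  obtain ⟨A₁, B₁, rfl, hA1, hB1⟩ := red_pi_inv h1
  obtain ⟨A₂, B₂, he, hA2, hB2⟩ := red_pi_inv h2
  injection he with e1 e2
  subst e1; subst e2
  exact ⟨(red_of_conv_dir hA1).trans _ _ _ ((red_of_conv_dir hA2).symm _ _),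
         (red_of_conv_dir hB1).trans _ _ _ ((red_of_conv_dir hB2).symm _ _)⟩

end Beta
section Gen
variable {S C : Type} {sp : Spec S} {sig : C → Tm S C} {valid : C → Prop}
  {R : Rule S C → Prop}

theorem typing_wf_ind
    (P : List (Tm S C) → Prop) (Q : List (Tm S C) → Tm S C → Tm S C → Prop)
    (hnil : P [])
    (hcons : ∀ {Γ : List (Tm S C)} {A : Tm S C} {s : S},
      Typing sp sig valid R Γ A (.sort s) → Q Γ A (.sort s) → P (A :: Γ))
    (hvar : ∀ {Γ i A}, Wf sp sig valid R Γ → Γ[i]? = some A → P Γ →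
      Q Γ (.var i) (Tm.lift (i+1) 0 A))
    (hconst : ∀ {Γ c}, Wf sp sig valid R Γ → valid c → P Γ → Q Γ (.const c) (sig c))
    (hsort : ∀ {Γ s₁ s₂}, Wf sp sig valid R Γ → sp.ax s₁ s₂ → P Γ →
      Q Γ (.sort s₁) (.sort s₂))
    (hpi : ∀ {Γ A B s₁ s₂ s₃}, Typing sp sig valid R Γ A (.sort s₁) →
      Typing sp sig valid R (A :: Γ) B (.sort s₂) → sp.ru s₁ s₂ s₃ →
      Q Γ A (.sort s₁) → Q (A :: Γ) B (.sort s₂) → Q Γ (.pi A B) (.sort s₃))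
    (hlam : ∀ {Γ A M B s}, Typing sp sig valid R (A :: Γ) M B →
      Typing sp sig valid R Γ (.pi A B) (.sort s) → Q (A :: Γ) M B →
      Q Γ (.pi A B) (.sort s) → Q Γ (.lam A M) (.pi A B))
    (happ : ∀ {Γ M N A B}, Typing sp sig valid R Γ M (.pi A B) →
      Typing sp sig valid R Γ N A → Q Γ M (.pi A B) → Q Γ N A →
      Q Γ (.app M N) (Tm.subst 0 N B))
    (hconv : ∀ {Γ M A B s}, Typing sp sig valid R Γ M A →
      Typing sp sig valid R Γ B (.sort s) → Conv R A B → Q Γ M A →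
      Q Γ B (.sort s) → Q Γ M B) :
    (∀ {Γ M T}, Typing sp sig valid R Γ M T → Q Γ M T) ∧
      (∀ {Γ}, Wf sp sig valid R Γ → P Γ) := by
  constructor
  · intro Γ M T h
    exact Typing.rec (motive_1 := fun Γ _ => P Γ) (motive_2 := fun Γ M T _ => Q Γ M T)
      hnil (fun a ih => hcons a ih) (fun a b ih => hvar a b ih)
      (fun a b ih => hconst a b ih) (fun a b ih => hsort a b ih)
      (fun a b c ih1 ih2 => hpi a b c ih1 ih2)
      (fun a b ih1 ih2 => hlam a b ih1 ih2) (fun a b ih1 ih2 => happ a b ih1 ih2)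
      (fun a b c ih1 ih2 => hconv a b c ih1 ih2) h
  · intro Γ h
    exact Wf.rec (motive_1 := fun Γ _ => P Γ) (motive_2 := fun Γ M T _ => Q Γ M T)
      hnil (fun a ih => hcons a ih) (fun a b ih => hvar a b ih)
      (fun a b ih => hconst a b ih) (fun a b ih => hsort a b ih)
      (fun a b c ih1 ih2 => hpi a b c ih1 ih2)
      (fun a b ih1 ih2 => hlam a b ih1 ih2) (fun a b ih1 ih2 => happ a b ih1 ih2)
      (fun a b c ih1 ih2 => hconv a b c ih1 ih2) h

lemma typing_wf {Γ : List (Tm S C)} {M T} (h : Typing sp sig valid R Γ M T) :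
    Wf sp sig valid R Γ := by
  refine (typing_wf_ind (fun _ => True) (fun Γ _ _ => Wf sp sig valid R Γ)
    trivial ?_ ?_ ?_ ?_ ?_ ?_ ?_ ?_).1 h
  · intros; trivial
  · intro _ _ _ hw _ _; exact hw
  · intro _ _ hw _ _; exact hw
  · intro _ _ _ hw _ _; exact hw
  · intro _ _ _ _ _ _ _ _ _ ih _; exact ih
  · intro _ _ _ _ _ _ _ _ ih; exact ih
  · intro _ _ _ _ _ _ _ ih _; exact ih
  · intro _ _ _ _ _ _ _ _ ih _; exact ih

lemma gen_sort {Γ : List (Tm S C)} {s : S} {T} (h : Typing sp sig valid R Γ (.sort s) T) :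
    ∃ s₂, sp.ax s s₂ ∧ Conv R T (.sort s₂) := by
  refine (typing_wf_ind (fun _ => True)
    (fun Γ M T => ∀ s, M = .sort s → ∃ s₂, sp.ax s s₂ ∧ Conv R T (.sort s₂))
    trivial (fun _ _ => trivial) ?_ ?_ ?_ ?_ ?_ ?_ ?_).1 h s rfl
  · intro _ _ _ _ _ _ s he; simp at he
  · intro _ _ _ _ _ s he; simp at he
  · intro Γ s₁ s₂ _ ha _ s he
    injection he with e; subst e
    exact ⟨s₂, ha, Relation.EqvGen.refl _⟩
  · intro _ _ _ _ _ _ _ _ _ _ _ s he; simp at he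
  · intro _ _ _ _ _ _ _ _ _ s he; simp at he
  · intro _ _ _ _ _ _ _ _ _ s he; simp at he
  · intro Γ M A B s₀ _ _ hab ih _ s he
    obtain ⟨s₂, ha, hc⟩ := ih s he
    exact ⟨s₂, ha, (hab.symm _ _).trans _ _ _ hc⟩

lemma gen_var {Γ : List (Tm S C)} {i : Nat} {T} (h : Typing sp sig valid R Γ (.var i) T) :
    ∃ A, Γ[i]? = some A ∧ Conv R T (Tm.lift (i+1) 0 A) := by
  refine (typing_wf_ind (fun _ => True)
    (fun Γ M T => ∀ i, M = .var i → ∃ A, Γ[i]? = some A ∧ Conv R T (Tm.lift (i+1) 0 A))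
    trivial (fun _ _ => trivial) ?_ ?_ ?_ ?_ ?_ ?_ ?_).1 h i rfl
  · intro Γ i A _ hg _ i' he
    injection he with e; subst e
    exact ⟨A, hg, Relation.EqvGen.refl _⟩
  · intro _ _ _ _ _ i he; simp at he
  · intro _ _ _ _ _ _ i he; simp at he
  · intro _ _ _ _ _ _ _ _ _ _ _ i he; simp at he
  · intro _ _ _ _ _ _ _ _ _ i he; simp at he
  · intro _ _ _ _ _ _ _ _ _ i he; simp at he
  · intro Γ M A B s₀ _ _ hab ih _ i he
    obtain ⟨A₀, hg, hc⟩ := ih i he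
    exact ⟨A₀, hg, (hab.symm _ _).trans _ _ _ hc⟩

lemma gen_const {Γ : List (Tm S C)} {c : C} {T} (h : Typing sp sig valid R Γ (.const c) T) :
    Conv R T (sig c) := by
  refine (typing_wf_ind (fun _ => True)
    (fun Γ M T => ∀ c, M = .const c → Conv R T (sig c))
    trivial (fun _ _ => trivial) ?_ ?_ ?_ ?_ ?_ ?_ ?_).1 h c rfl
  · intro _ _ _ _ _ _ c he; simp at he
  · intro Γ c _ _ _ c' he
    injection he with e; subst e
    exact Relation.EqvGen.refl _
  · intro _ _ _ _ _ _ c he; simp at he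
  · intro _ _ _ _ _ _ _ _ _ _ _ c he; simp at he
  · intro _ _ _ _ _ _ _ _ _ c he; simp at he
  · intro _ _ _ _ _ _ _ _ _ c he; simp at he
  · intro Γ M A B s₀ _ _ hab ih _ c he
    exact (hab.symm _ _).trans _ _ _ (ih c he)

lemma gen_pi {Γ : List (Tm S C)} {A B T} (h : Typing sp sig valid R Γ (.pi A B) T) :
    ∃ s₁ s₂ s₃, Typing sp sig valid R Γ A (.sort s₁) ∧
      Typing sp sig valid R (A :: Γ) B (.sort s₂) ∧ sp.ru s₁ s₂ s₃ ∧
      Conv R T (.sort s₃) := by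
  refine (typing_wf_ind (fun _ => True)
    (fun Γ M T => ∀ A B, M = .pi A B → ∃ s₁ s₂ s₃, Typing sp sig valid R Γ A (.sort s₁) ∧
      Typing sp sig valid R (A :: Γ) B (.sort s₂) ∧ sp.ru s₁ s₂ s₃ ∧ Conv R T (.sort s₃))
    trivial (fun _ _ => trivial) ?_ ?_ ?_ ?_ ?_ ?_ ?_).1 h A B rfl
  · intro _ _ _ _ _ _ A B he; simp at he
  · intro _ _ _ _ _ A B he; simp at he
  · intro _ _ _ _ _ _ A B he; simp at he
  · intro Γ A B s₁ s₂ s₃ h1 h2 hr _ _ A' B' he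
    injection he with e1 e2; subst e1; subst e2
    exact ⟨s₁, s₂, s₃, h1, h2, hr, Relation.EqvGen.refl _⟩
  · intro _ _ _ _ _ _ _ _ _ A B he; simp at he
  · intro _ _ _ _ _ _ _ _ _ A B he; simp at he
  · intro Γ M A₀ B₀ s₀ _ _ hab ih _ A B he
    obtain ⟨s₁, s₂, s₃, h1, h2, hr, hc⟩ := ih A B he
    exact ⟨s₁, s₂, s₃, h1, h2, hr, (hab.symm _ _).trans _ _ _ hc⟩

lemma gen_lam {Γ : List (Tm S C)} {A M T} (h : Typing sp sig valid R Γ (.lam A M) T) :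
    ∃ B, Typing sp sig valid R (A :: Γ) M B ∧ Conv R T (.pi A B) := by
  refine (typing_wf_ind (fun _ => True)
    (fun Γ M₀ T => ∀ A M, M₀ = .lam A M → ∃ B, Typing sp sig valid R (A :: Γ) M B ∧
      Conv R T (.pi A B))
    trivial (fun _ _ => trivial) ?_ ?_ ?_ ?_ ?_ ?_ ?_).1 h A M rfl
  · intro _ _ _ _ _ _ A M he; simp at he
  · intro _ _ _ _ _ A M he; simp at he
  · intro _ _ _ _ _ _ A M he; simp at he
  · intro _ _ _ _ _ _ _ _ _ _ _ A M he; simp at he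
  · intro Γ A M B s₀ h1 _ _ _ A' M' he
    injection he with e1 e2; subst e1; subst e2
    exact ⟨B, h1, Relation.EqvGen.refl _⟩
  · intro _ _ _ _ _ _ _ _ _ A M he; simp at he
  · intro Γ M₀ A₀ B₀ s₀ _ _ hab ih _ A M he
    obtain ⟨B, h1, hc⟩ := ih A M he
    exact ⟨B, h1, (hab.symm _ _).trans _ _ _ hc⟩

lemma gen_app {Γ : List (Tm S C)} {M N T} (h : Typing sp sig valid R Γ (.app M N) T) :
    ∃ A B, Typing sp sig valid R Γ M (.pi A B) ∧ Typing sp sig valid R Γ N A ∧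
      Conv R T (Tm.subst 0 N B) := by
  refine (typing_wf_ind (fun _ => True)
    (fun Γ M₀ T => ∀ M N, M₀ = .app M N → ∃ A B, Typing sp sig valid R Γ M (.pi A B) ∧
      Typing sp sig valid R Γ N A ∧ Conv R T (Tm.subst 0 N B))
    trivial (fun _ _ => trivial) ?_ ?_ ?_ ?_ ?_ ?_ ?_).1 h M N rfl
  · intro _ _ _ _ _ _ M N he; simp at he
  · intro _ _ _ _ _ M N he; simp at he
  · intro _ _ _ _ _ _ M N he; simp at he
  · intro _ _ _ _ _ _ _ _ _ _ _ M N he; simp at he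
  · intro _ _ _ _ _ _ _ _ _ M N he; simp at he
  · intro Γ M N A B h1 h2 _ _ M' N' he
    injection he with e1 e2; subst e1; subst e2
    exact ⟨A, B, h1, h2, Relation.EqvGen.refl _⟩
  · intro Γ M₀ A₀ B₀ s₀ _ _ hab ih _ M N he
    obtain ⟨A, B, h1, h2, hc⟩ := ih M N he
    exact ⟨A, B, h1, h2, (hab.symm _ _).trans _ _ _ hc⟩

end Gen

section Uniq
variable {S C : Type} {sp : Spec S} {sig : C → Tm S C} {valid : C → Prop}

theorem typing_unique (hfun : sp.Functional) :
    ∀ {M : Tm S C} {Γ T T'}, Typing sp sig valid NoRules Γ M T →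
      Typing sp sig valid NoRules Γ M T' → Conv NoRules T T' := by
  intro M
  induction M with
  | sort s =>
      intro Γ T T' h1 h2
      obtain ⟨s₂, ha, hc⟩ := gen_sort h1
      obtain ⟨s₂', ha', hc'⟩ := gen_sort h2
      cases hfun.1 _ _ _ ha ha'
      exact hc.trans _ _ _ (hc'.symm _ _)
  | const c =>
      intro Γ T T' h1 h2
      exact (gen_const h1).trans _ _ _ ((gen_const h2).symm _ _)
  | var i =>
      intro Γ T T' h1 h2
      obtain ⟨A, hg, hc⟩ := gen_var h1
      obtain ⟨A', hg', hc'⟩ := gen_var h2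
      rw [hg] at hg'
      injection hg' with e; subst e
      exact hc.trans _ _ _ (hc'.symm _ _)
  | app M N ihM ihN =>
      intro Γ T T' h1 h2
      obtain ⟨A, B, hM, hN, hc⟩ := gen_app h1
      obtain ⟨A', B', hM', hN', hc'⟩ := gen_app h2
      have hpi := ihM hM hM'
      have hB := (conv_pi_inj hpi).2
      have : Conv NoRules (Tm.subst 0 N B) (Tm.subst 0 N B') := conv_subst hB 0 N
      exact (hc.trans _ _ _ this).trans _ _ _ (hc'.symm _ _)
  | lam A M ihA ihM =>
      intro Γ T T' h1 h2
      obtain ⟨B, hM, hc⟩ := gen_lam h1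
      obtain ⟨B', hM', hc'⟩ := gen_lam h2
      have hB := ihM hM hM'
      have : Conv NoRules (Tm.pi A B) (Tm.pi A B') :=
        conv_map _ (fun _ _ hs => Step.piB hs) hB
      exact (hc.trans _ _ _ this).trans _ _ _ (hc'.symm _ _)
  | pi A B ihA ihB =>
      intro Γ T T' h1 h2
      obtain ⟨s₁, s₂, s₃, hA, hB, hr, hc⟩ := gen_pi h1
      obtain ⟨s₁', s₂', s₃', hA', hB', hr', hc'⟩ := gen_pi h2
      cases conv_sort_inj (ihA hA hA')
      cases conv_sort_inj (ihB hB hB')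
      cases hfun.2 _ _ _ _ hr hr'
      exact hc.trans _ _ _ (hc'.symm _ _)

/-- Sort-uniqueness. -/
theorem sort_unique (hfun : sp.Functional) {M : Tm S C} {Γ s s'}
    (h1 : Typing sp sig valid NoRules Γ M (.sort s))
    (h2 : Typing sp sig valid NoRules Γ M (.sort s')) : s = s' :=
  conv_sort_inj (typing_unique hfun h1 h2)

end Uniq
section SubstLemma
variable {S C : Type} {sp : Spec S} {sig : C → Tm S C} {valid : C → Prop}

/-- Lifting a context prefix (for weakening by one variable). -/
def liftCtx : List (Tm S C) → List (Tm S C)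
  | [] => []
  | A :: Δ => Tm.lift 1 Δ.length A :: liftCtx Δ

/-- Substituting in a context prefix. -/
def substCtx (N : Tm S C) : List (Tm S C) → List (Tm S C)
  | [] => []
  | A :: Δ => Tm.subst Δ.length N A :: substCtx N Δ

@[simp] lemma liftCtx_length (Δ : List (Tm S C)) : (liftCtx Δ).length = Δ.length := by
  induction Δ <;> simp [liftCtx, *]

@[simp] lemma substCtx_length (N : Tm S C) (Δ : List (Tm S C)) :
    (substCtx N Δ).length = Δ.length := by
  induction Δ <;> simp [substCtx, *]

lemma liftCtx_get? (Δ : List (Tm S C)) {i : Nat} {A : Tm S C}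
    (h : Δ[i]? = some A) :
    (liftCtx Δ)[i]? = some (Tm.lift 1 (Δ.length - 1 - i) A) := by
  induction Δ generalizing i with
  | nil => simp at h
  | cons D Δ ih =>
      cases i with
      | zero =>
          simp only [List.getElem?_cons_zero] at h
          injection h with e; subst e
          simp [liftCtx]
      | succ i =>
          simp only [List.getElem?_cons_succ] at h
          have := ih h
          simp only [liftCtx, List.getElem?_cons_succ, List.length_cons]
          rw [this]
          congr 2
          omega

lemma substCtx_get? (N : Tm S C) (Δ : List (Tm S C)) {i : Nat} {A : Tm S C}
    (h : Δ[i]? = some A) :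
    (substCtx N Δ)[i]? = some (Tm.subst (Δ.length - 1 - i) N A) := by
  induction Δ generalizing i with
  | nil => simp at h
  | cons D Δ ih =>
      cases i with
      | zero =>
          simp only [List.getElem?_cons_zero] at h
          injection h with e; subst e
          simp [substCtx]
      | succ i =>
          simp only [List.getElem?_cons_succ] at h
          have := ih h
          simp only [substCtx, List.getElem?_cons_succ, List.length_cons]
          rw [this]
          congr 2
          omega

theorem typing_weaken_aux (hv : ∀ c, ¬ valid c) {Γ : List (Tm S C)} {A₀ : Tm S C}
    {s₀ : S} (hA : Typing sp sig valid NoRules Γ A₀ (.sort s₀)) :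
    (∀ {Γ' M T}, Typing sp sig valid NoRules Γ' M T → ∀ Δ, Γ' = Δ ++ Γ →
      Typing sp sig valid NoRules (liftCtx Δ ++ A₀ :: Γ)
        (Tm.lift 1 Δ.length M) (Tm.lift 1 Δ.length T)) ∧
    (∀ {Γ'}, Wf sp sig valid NoRules Γ' → ∀ Δ, Γ' = Δ ++ Γ →
      Wf sp sig valid NoRules (liftCtx Δ ++ A₀ :: Γ)) := by
  have main := typing_wf_ind (sp := sp) (sig := sig) (valid := valid) (R := NoRules)
    (fun Γ' => ∀ Δ, Γ' = Δ ++ Γ → Wf sp sig valid NoRules (liftCtx Δ ++ A₀ :: Γ))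
    (fun Γ' M T => ∀ Δ, Γ' = Δ ++ Γ →
      Typing sp sig valid NoRules (liftCtx Δ ++ A₀ :: Γ)
        (Tm.lift 1 Δ.length M) (Tm.lift 1 Δ.length T))
    ?hnil ?hcons ?hvar ?hconst ?hsort ?hpi ?hlam ?happ ?hconv
  · exact ⟨fun h Δ he => main.1 h Δ he, fun h Δ he => main.2 h Δ he⟩
  case hnil =>
      intro Δ he
      obtain ⟨h1, h2⟩ := List.append_eq_nil_iff.mp he.symm
      subst h1
      subst h2
      exact Wf.cons hA
  case hcons =>
      intro Γ₁ A s h ih Δ he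
      cases Δ with
      | nil =>
          simp only [List.nil_append] at he
          subst he
          exact Wf.cons hA
      | cons D Δ' =>
          simp only [List.cons_append] at he
          injection he with e1 e2; subst e1; subst e2
          exact Wf.cons (ih Δ' rfl)
  case hvar =>
      intro Γ₁ i A hw hg ihP Δ he
      subst he
      set k := Δ.length with hk
      by_cases hik : i < k
      · have hΔ : Δ[i]? = some A := by
          rw [List.getElem?_append_left hik] at hg; exact hg
        have hlook : (liftCtx Δ ++ A₀ :: Γ)[i]?
            = some (Tm.lift 1 (k - 1 - i) A) := by
          rw [List.getElem?_append_left (by simp; omega)]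
          exact liftCtx_get? Δ hΔ
        have htyp := Typing.var (ihP Δ rfl) hlook
        have he2 : Tm.lift 1 k (Tm.lift (i+1) 0 A)
            = Tm.lift (i+1) 0 (Tm.lift 1 (k - 1 - i) A) := by
          rw [Tm.lift_lift_high A (by omega)]
          congr 2
          omega
        have he3 : Tm.lift 1 k (Tm.var i) = (Tm.var i : Tm S C) := by
          simp [Tm.lift, hik]
        rw [he2, he3]
        exact htyp
      · have hg2 : Γ[(i - k)]? = some A := by
          rw [List.getElem?_append_right (by omega)] at hg; exact hg
        have hlook : (liftCtx Δ ++ A₀ :: Γ)[(i+1)]? = some A := by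
          rw [List.getElem?_append_right (by simp; omega)]
          simp only [liftCtx_length]
          have : i + 1 - k = (i - k) + 1 := by omega
          rw [this]
          simpa using hg2
        have htyp := Typing.var (ihP Δ rfl) hlook
        have he2 : Tm.lift 1 k (Tm.lift (i+1) 0 A) = Tm.lift (i+1+1) 0 A := by
          rw [Tm.lift_lift_mid A (by omega) (by omega)]
        have he3 : Tm.lift 1 k (Tm.var i) = (Tm.var (i+1) : Tm S C) := by
          simp [Tm.lift, hik]
        rw [he2, he3]
        exact htyp
  case hconst => intro Γ₁ c _ hval _ _ _; exact absurd hval (hv c)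
  case hsort =>
      intro Γ₁ s₁ s₂ hw ha ihP Δ he
      exact Typing.sort (ihP Δ he) ha
  case hpi =>
      intro Γ₁ A B s₁ s₂ s₃ h1 h2 hr ih1 ih2 Δ he
      subst he
      have r1 := ih1 Δ rfl
      have r2 := ih2 (A :: Δ) rfl
      simp only [liftCtx, List.length_cons, List.cons_append] at r2
      exact Typing.pi r1 r2 hr
  case hlam =>
      intro Γ₁ A M B s h1 h2 ih1 ih2 Δ he
      subst he
      have r1 := ih1 (A :: Δ) rfl
      simp only [liftCtx, List.length_cons, List.cons_append] at r1
      have r2 := ih2 Δ rfl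
      simp only [Tm.lift] at r2 ⊢
      exact Typing.lam r1 r2
  case happ =>
      intro Γ₁ M N A B h1 h2 ih1 ih2 Δ he
      subst he
      have r1 := ih1 Δ rfl
      have r2 := ih2 Δ rfl
      simp only [Tm.lift] at r1 ⊢
      have he2 : Tm.lift 1 Δ.length (Tm.subst 0 N B)
          = Tm.subst 0 (Tm.lift 1 Δ.length N) (Tm.lift 1 (Δ.length+1) B) := by
        rw [Tm.lift_subst B N (Nat.zero_le _), Nat.sub_zero]
      rw [he2]
      exact Typing.app r1 r2
  case hconv =>
      intro Γ₁ M A B s h1 h2 hc ih1 ih2 Δ he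
      subst he
      exact Typing.conv (ih1 Δ rfl) (ih2 Δ rfl) (conv_lift hc 1 Δ.length)

lemma wf_cons_inv {Γ : List (Tm S C)} {A : Tm S C}
    (h : Wf sp sig valid NoRules (A :: Γ)) :
    ∃ s, Typing sp sig valid NoRules Γ A (.sort s) := by
  cases h with | cons h => exact ⟨_, h⟩

theorem typing_weaken1 (hv : ∀ c, ¬ valid c) {Γ : List (Tm S C)} {A₀ M T : Tm S C}
    {s₀ : S} (hA : Typing sp sig valid NoRules Γ A₀ (.sort s₀))
    (h : Typing sp sig valid NoRules Γ M T) :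
    Typing sp sig valid NoRules (A₀ :: Γ) (Tm.lift 1 0 M) (Tm.lift 1 0 T) :=
  (typing_weaken_aux hv hA).1 h [] rfl

theorem typing_weaken_many (hv : ∀ c, ¬ valid c) {Γ Δ' : List (Tm S C)} {N B : Tm S C}
    (hw : Wf sp sig valid NoRules (Δ' ++ Γ))
    (hN : Typing sp sig valid NoRules Γ N B) :
    Typing sp sig valid NoRules (Δ' ++ Γ)
      (Tm.lift Δ'.length 0 N) (Tm.lift Δ'.length 0 B) := by
  induction Δ' with
  | nil => simpa using hN
  | cons A Δ' ih =>
      obtain ⟨s, hA⟩ := wf_cons_inv hw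
      have r := ih (typing_wf hA)
      have r2 := typing_weaken1 hv hA r
      rw [Tm.lift_lift_mid N (by omega) (by omega),
          Tm.lift_lift_mid B (by omega) (by omega)] at r2
      simpa using r2

theorem typing_subst_aux (hv : ∀ c, ¬ valid c) {Γ : List (Tm S C)} {N B : Tm S C}
    (hN : Typing sp sig valid NoRules Γ N B) :
    (∀ {Γ' M T}, Typing sp sig valid NoRules Γ' M T → ∀ Δ, Γ' = Δ ++ B :: Γ →
      Typing sp sig valid NoRules (substCtx N Δ ++ Γ)
        (Tm.subst Δ.length N M) (Tm.subst Δ.length N T)) ∧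
    (∀ {Γ'}, Wf sp sig valid NoRules Γ' → ∀ Δ, Γ' = Δ ++ B :: Γ →
      Wf sp sig valid NoRules (substCtx N Δ ++ Γ)) := by
  have main := typing_wf_ind (sp := sp) (sig := sig) (valid := valid) (R := NoRules)
    (fun Γ' => ∀ Δ, Γ' = Δ ++ B :: Γ → Wf sp sig valid NoRules (substCtx N Δ ++ Γ))
    (fun Γ' M T => ∀ Δ, Γ' = Δ ++ B :: Γ →
      Typing sp sig valid NoRules (substCtx N Δ ++ Γ)
        (Tm.subst Δ.length N M) (Tm.subst Δ.length N T))
    ?hnil ?hcons ?hvar ?hconst ?hsort ?hpi ?hlam ?happ ?hconv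
  · exact ⟨fun h Δ he => main.1 h Δ he, fun h Δ he => main.2 h Δ he⟩
  case hnil => intro Δ he; cases Δ <;> simp at he
  case hcons =>
      intro Γ₁ A s h ih Δ he
      cases Δ with
      | nil =>
          simp only [List.nil_append] at he
          injection he with e1 e2; subst e2
          exact typing_wf hN
      | cons D Δ' =>
          simp only [List.cons_append] at he
          injection he with e1 e2; subst e1; subst e2
          exact Wf.cons (ih Δ' rfl)
  case hvar =>
      intro Γ₁ i A hw hg ihP Δ he
      subst he
      set k := Δ.length with hk
      rcases Nat.lt_trichotomy i k with hik | hik | hik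
      · have hΔ : Δ[i]? = some A := by
          rw [List.getElem?_append_left hik] at hg; exact hg
        have hlook : (substCtx N Δ ++ Γ)[i]?
            = some (Tm.subst (k - 1 - i) N A) := by
          rw [List.getElem?_append_left (by simp; omega)]
          exact substCtx_get? N Δ hΔ
        have htyp := Typing.var (ihP Δ rfl) hlook
        have he2 : Tm.subst k N (Tm.lift (i+1) 0 A)
            = Tm.lift (i+1) 0 (Tm.subst (k - 1 - i) N A) := by
          rw [Tm.subst_lift_high A N (by omega)]
          congr 2
          omega
        have he3 : Tm.subst k N (Tm.var i) = (Tm.var i : Tm S C) := by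
          simp [Tm.subst, hik]
        rw [he2, he3]
        exact htyp
      · have hg2 : B = A := by
          rw [List.getElem?_append_right (by omega)] at hg
          have e0 : i - k = 0 := by omega
          rw [e0] at hg
          simpa using hg
        subst hg2
        have he2 : Tm.subst k N (Tm.lift (i+1) 0 B) = Tm.lift k 0 B := by
          rw [Tm.subst_lift_cancel B N (by omega) (by omega), Nat.add_sub_cancel, hik]
        have he3 : Tm.subst k N (Tm.var i) = Tm.lift k 0 N := by
          simp only [Tm.subst]
          rw [if_neg (by omega), if_pos hik]
        rw [he2, he3]
        have hwf := ihP Δ rfl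
        have := typing_weaken_many hv hwf hN
        simpa [hk] using this
      · have hg2 : Γ[(i - k - 1)]? = some A := by
          rw [List.getElem?_append_right (by omega)] at hg
          have : i - k = (i - k - 1) + 1 := by omega
          rw [this] at hg
          simpa using hg
        have hlook : (substCtx N Δ ++ Γ)[(i-1)]? = some A := by
          rw [List.getElem?_append_right (by simp; omega)]
          simp only [substCtx_length]
          have : i - 1 - k = i - k - 1 := by omega
          rw [this]
          exact hg2
        have htyp := Typing.var (ihP Δ rfl) hlook
        have he2 : Tm.subst k N (Tm.lift (i+1) 0 A) = Tm.lift i 0 A := by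
          rw [Tm.subst_lift_cancel A N (by omega) (by omega), Nat.add_sub_cancel]
        have he3 : Tm.subst k N (Tm.var i) = (Tm.var (i-1) : Tm S C) := by
          simp only [Tm.subst]
          rw [if_neg (by omega), if_neg (by omega)]
        have he4 : (i - 1) + 1 = i := by omega
        rw [he2, he3]
        rw [he4] at htyp
        exact htyp
  case hconst => intro Γ₁ c _ hval _ _ _; exact absurd hval (hv c)
  case hsort =>
      intro Γ₁ s₁ s₂ hw ha ihP Δ he
      exact Typing.sort (ihP Δ he) ha
  case hpi =>
      intro Γ₁ A B₁ s₁ s₂ s₃ h1 h2 hr ih1 ih2 Δ he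
      subst he
      have r1 := ih1 Δ rfl
      have r2 := ih2 (A :: Δ) rfl
      simp only [substCtx, List.length_cons, List.cons_append] at r2
      exact Typing.pi r1 r2 hr
  case hlam =>
      intro Γ₁ A M B₁ s h1 h2 ih1 ih2 Δ he
      subst he
      have r1 := ih1 (A :: Δ) rfl
      simp only [substCtx, List.length_cons, List.cons_append] at r1
      have r2 := ih2 Δ rfl
      simp only [Tm.subst] at r2 ⊢
      exact Typing.lam r1 r2
  case happ =>
      intro Γ₁ M N₁ A B₁ h1 h2 ih1 ih2 Δ he
      subst he
      have r1 := ih1 Δ rfl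
      have r2 := ih2 Δ rfl
      simp only [Tm.subst] at r1 ⊢
      have he2 : Tm.subst Δ.length N (Tm.subst 0 N₁ B₁)
          = Tm.subst 0 (Tm.subst Δ.length N N₁) (Tm.subst (Δ.length+1) N B₁) := by
        rw [Tm.subst_subst B₁ N N₁ (Nat.zero_le _), Nat.sub_zero]
      rw [he2]
      exact Typing.app r1 r2
  case hconv =>
      intro Γ₁ M A B₁ s h1 h2 hc ih1 ih2 Δ he
      subst he
      exact Typing.conv (ih1 Δ rfl) (ih2 Δ rfl) (conv_subst hc Δ.length N)

theorem typing_subst0 (hv : ∀ c, ¬ valid c) {Γ : List (Tm S C)} {N B M T : Tm S C}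
    (hN : Typing sp sig valid NoRules Γ N B)
    (hM : Typing sp sig valid NoRules (B :: Γ) M T) :
    Typing sp sig valid NoRules Γ (Tm.subst 0 N M) (Tm.subst 0 N T) :=
  (typing_subst_aux hv hN).1 hM [] rfl

end SubstLemma
lemma mc_functional {S : Type} {sp : Spec S} (hfun : sp.Functional) (τ : S) :
    (mc sp τ).Functional := by
  constructor
  · intro s₁ s₂ s₂' h h'
    rcases h with h | ⟨_, hn, rfl⟩
    · rcases h' with h' | ⟨_, hn', rfl⟩
      · exact hfun.1 _ _ _ h h'
      · exact absurd ⟨_, h⟩ hn'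
    · rcases h' with h' | ⟨_, hn', rfl⟩
      · exact absurd ⟨_, h'⟩ hn
      · rfl
  · intro s₁ s₂ s₃ s₃' h h'
    rcases h with h | ⟨_, _, hn, rfl⟩
    · rcases h' with h' | ⟨_, _, hn', rfl⟩
      · exact hfun.2 _ _ _ _ h h'
      · exact absurd ⟨_, h⟩ hn'
    · rcases h' with h' | ⟨_, _, hn', rfl⟩
      · exact absurd ⟨_, h'⟩ hn
      · rfl

theorem ht_subst_aux {S : Type} {sp : Spec S} (hfun : sp.Functional) {τ : S}
    {Γ : List (Tm S Empty)} {N B : Tm S Empty}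
    (hN : PTyping (mc sp τ) Γ N B) :
    ∀ {Γ₁ C₀ n}, Ht sp τ Γ₁ C₀ n → ∀ Δ, Γ₁ = Δ ++ B :: Γ →
      ∀ m, Ht sp τ (substCtx N Δ ++ Γ) (Tm.subst Δ.length N C₀) m → m = n := by
  have hv : ∀ c : Empty, ¬ (fun _ : Empty => False) c := fun c h => h
  have mcfun := mc_functional hfun τ
  intro Γ₁ C₀ n h1
  induction h1 with
  | @ntau Γ₁ A s hT hs =>
      intro Δ he m h2
      subst he
      have hT' := (typing_subst_aux hv hN).1 hT Δ rfl
      simp only [Tm.subst] at hT'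
      generalize hE : Tm.subst Δ.length N A = D at h2 hT'
      cases h2 with
      | ntau _ _ => rfl
      | srt h2T => exact absurd (sort_unique mcfun hT' h2T) hs
      | pi h2T _ _ => exact absurd (sort_unique mcfun hT' h2T) hs
  | @srt Γ₁ s' hT =>
      intro Δ he m h2
      simp only [Tm.subst] at h2
      cases h2 with
      | ntau _ _ => rfl
      | srt _ => rfl
  | @pi Γ₁ B' C' m₁ n₁ hT hB hC ihB ihC =>
      intro Δ he m h2
      subst he
      have hT' := (typing_subst_aux hv hN).1 hT Δ rfl
      simp only [Tm.subst] at h2 hT'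
      cases h2 with
      | ntau h2T hs2 => exact absurd (sort_unique mcfun h2T hT') hs2
      | @pi _ _ _ m₂ n₂ h2T hB2 hC2 =>
          have e1 := ihB Δ rfl _ hB2
          have hC2' : Ht sp τ (substCtx N (B' :: Δ) ++ Γ)
              (Tm.subst (B' :: Δ).length N C') n₂ := by
            simpa [substCtx] using hC2
          have e2 := ihC (B' :: Δ) rfl _ hC2'
          rw [e1, e2]
/-- substitution preserves the τ-height:
ℋ_τ(C[x\N]) = ℋ_τ(C) for τ-typed C and typed N. -/
theorem height_subst_invariant {S : Type} (sp : Spec S) (hfun : sp.Functional)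
    (τ : S) (hτ : τ ∉ sp.sorts) {Γ : List (Tm S Empty)} {B C N : Tm S Empty}
    {n m : Nat}
    (hC : PTyping (mc sp τ) (B :: Γ) C (.sort τ))
    (hN : PTyping (mc sp τ) Γ N B)
    (h1 : Ht sp τ (B :: Γ) C n) (h2 : Ht sp τ Γ (Tm.subst 0 N C) m) :
    m = n :=
  ht_subst_aux hfun hN h1 [] rfl m (by simpa [substCtx] using h2)
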